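/- (Semigroup property of fractional $q$-Weyl integrals.) Let $0<q<1$ and $\nu,\mu \in \mathbb{C}$ with $\Re\nu > 0$, $\Re\mu > 0$. Define $(W_\nu f)(x) = x^\nu \sum_{l=0}^\infty f(xq^{-l}) q^{-l\nu} \frac{(q^\nu;q)_l}{(q;q)_l}$ for functions $f$ on $(0,\infty)$ for which the series converges absolutely. Then for any $\rho > \Re(\mu+\nu)$ and any $f$ satisfying $|f(xq^{-l})| = O(q^{l\rho})$ as $l \to \infty$ for each $x \in (q,1]$: $W_\nu(W_\mu f) = W_{\nu+\mu} f$ pointwise on $(0,\infty)$. -/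

import Mathlib

/-- Finite q-shifted factorial `(c;q)_j`. -/
noncomputable def qP (q : ℝ) (c : ℂ) (j : ℕ) : ℂ :=
  ∏ i ∈ Finset.range j, (1 - c * (q : ℂ) ^ i)

open Finset

section API
variable {q : ℝ}

lemma rpos_cpow_eq {r : ℝ} (hr : 0 < r) (w : ℂ) :
    (r : ℂ) ^ w = Complex.exp ((Real.log r : ℂ) * w) := by
  rw [Complex.cpow_def_of_ne_zero (by exact_mod_cast hr.ne' : (r:ℂ) ≠ 0),
    Complex.ofReal_log hr.le]

lemma rpos_cpow_norm {r : ℝ} (hr : 0 < r) (w : ℂ) :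
    ‖(r : ℂ) ^ w‖ = r ^ w.re := by
  rw [rpos_cpow_eq hr, Complex.norm_exp, Real.rpow_def_of_pos hr]
  congr 1
  simp [Complex.mul_re]

lemma rpos_cpow_add {r : ℝ} (hr : 0 < r) (a b : ℂ) :
    (r:ℂ)^(a+b) = (r:ℂ)^a * (r:ℂ)^b := by
  rw [rpos_cpow_eq hr, rpos_cpow_eq hr, rpos_cpow_eq hr, mul_add, Complex.exp_add]

lemma rpos_cpow_natmul {r : ℝ} (hr : 0 < r) (k : ℕ) (w : ℂ) :
    (r:ℂ)^((k:ℂ)*w) = ((r:ℂ)^w)^k := by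
  rw [rpos_cpow_eq hr, rpos_cpow_eq hr, ← Complex.exp_nat_mul]
  congr 1; ring

lemma div_pow_cpow (hq : 0 < q) {x : ℝ} (hx : 0 < x) (l : ℕ) (w : ℂ) :
    ((x / q ^ l : ℝ) : ℂ) ^ w = (x:ℂ)^w * (q:ℂ)^(-(l:ℂ)*w) := by
  have h1 : (0:ℝ) < x / q^l := by positivity
  rw [rpos_cpow_eq h1, rpos_cpow_eq hx, rpos_cpow_eq hq, ← Complex.exp_add]
  congr 1
  have h2 : Real.log (x / q^l) = Real.log x - l * Real.log q := by
    rw [Real.log_div hx.ne' (by positivity), Real.log_pow]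
  rw [h2]; push_cast; ring

lemma qP_succ (c : ℂ) (j : ℕ) : qP q c (j+1) = qP q c j * (1 - c * (q:ℂ)^j) :=
  Finset.prod_range_succ _ _

lemma geom_sum_le_inv (hq0 : 0 < q) (hq1 : q < 1) (n : ℕ) :
    ∑ i ∈ Finset.range n, q ^ i ≤ (1 - q)⁻¹ := by
  rw [geom_sum_eq hq1.ne n, div_le_iff_of_neg (by linarith : q - 1 < 0)]
  have h : (1-q)⁻¹ * (q-1) = -1 := by
    rw [inv_mul_eq_div, div_eq_iff (by linarith : (1:ℝ)-q ≠ 0)]; ring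
  rw [h]
  nlinarith [pow_nonneg hq0.le n]

lemma qP_norm_le (hq0 : 0 < q) (hq1 : q < 1) (c : ℂ) (j : ℕ) :
    ‖qP q c j‖ ≤ Real.exp (‖c‖ * (1 - q)⁻¹) := by
  rw [qP, norm_prod]
  have hqn : ‖(q:ℂ)‖ = q := by simp [Complex.norm_real, abs_of_pos hq0]
  calc ∏ i ∈ range j, ‖1 - c * (q:ℂ)^i‖
      ≤ ∏ i ∈ range j, Real.exp (‖c‖ * q^i) := by
        apply Finset.prod_le_prod (fun i _ => norm_nonneg _)
        intro i _
        have h1 : ‖1 - c*(q:ℂ)^i‖ ≤ 1 + ‖c‖ * q^i := by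
          calc ‖1 - c*(q:ℂ)^i‖ ≤ ‖(1:ℂ)‖ + ‖c*(q:ℂ)^i‖ := norm_sub_le _ _
          _ = 1 + ‖c‖ * q^i := by rw [norm_one, norm_mul, norm_pow, hqn]
        linarith [Real.add_one_le_exp (‖c‖*q^i)]
    _ = Real.exp (∑ i ∈ range j, ‖c‖ * q^i) := (Real.exp_sum _ _).symm
    _ ≤ Real.exp (‖c‖ * (1-q)⁻¹) := by
        apply Real.exp_le_exp.2
        rw [← Finset.mul_sum]
        exact mul_le_mul_of_nonneg_left (geom_sum_le_inv hq0 hq1 j) (norm_nonneg c)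

lemma qP_q_eq (j : ℕ) : qP q (q:ℂ) j = ((∏ i ∈ Finset.range j, (1 - q * q^i) : ℝ) : ℂ) := by
  rw [qP]; push_cast; rfl

lemma one_sub_ge_exp {t s : ℝ} (ht0 : 0 ≤ t) (hts : t ≤ s) (hs : s < 1) :
    Real.exp (-(t * (1-s)⁻¹)) ≤ 1 - t := by
  have h1 : 0 < 1 - s := by linarith
  have h2 := Real.add_one_le_exp (t * (1-s)⁻¹)
  have key : 1 ≤ (1-t) * Real.exp (t*(1-s)⁻¹) := by
    have h3 : (1-t) * (t*(1-s)⁻¹ + 1) - 1 = (s-t)*t*(1-s)⁻¹ := by field_simp; ring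
    nlinarith [mul_nonneg (mul_nonneg (by linarith : (0:ℝ) ≤ s - t) ht0) (inv_nonneg.2 h1.le)]
  rw [Real.exp_neg, inv_eq_one_div, div_le_iff₀ (Real.exp_pos _)]
  linarith [key]

lemma qP_q_lower (hq0 : 0 < q) (hq1 : q < 1) (j : ℕ) :
    Real.exp (-(q * (1-q)⁻¹ * (1-q)⁻¹)) ≤ ‖qP q (q:ℂ) j‖ := by
  have hfac : ∀ i : ℕ, 0 < 1 - q * q^i := by
    intro i
    have : q * q^i ≤ q * 1 := by
      apply mul_le_mul_of_nonneg_left _ hq0.le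
      exact pow_le_one₀ hq0.le hq1.le
    nlinarith
  rw [qP_q_eq, Complex.norm_real,
    Real.norm_of_nonneg (Finset.prod_pos (fun i _ => hfac i)).le]
  calc Real.exp (-(q*(1-q)⁻¹*(1-q)⁻¹))
      ≤ Real.exp (∑ i ∈ range j, -(q*q^i*(1-q)⁻¹)) := by
        apply Real.exp_le_exp.2
        have h : ∑ i ∈ range j, -(q*q^i*(1-q)⁻¹) = -((q*(1-q)⁻¹) * ∑ i ∈ range j, q^i) := by
          rw [Finset.mul_sum, ← Finset.sum_neg_distrib]
          apply Finset.sum_congr rfl; intro i _; ring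
        rw [h, neg_le_neg_iff]
        calc (q*(1-q)⁻¹) * ∑ i ∈ range j, q^i ≤ (q*(1-q)⁻¹) * (1-q)⁻¹ := by
              apply mul_le_mul_of_nonneg_left (geom_sum_le_inv hq0 hq1 j)
              have h1q : (0:ℝ) < 1 - q := by linarith
              positivity
          _ = q*(1-q)⁻¹*(1-q)⁻¹ := by ring
    _ = ∏ i ∈ range j, Real.exp (-(q*q^i*(1-q)⁻¹)) := Real.exp_sum _ _
    _ ≤ ∏ i ∈ range j, (1 - q*q^i) := by
        apply Finset.prod_le_prod (fun i _ => (Real.exp_pos _).le)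
        intro i _
        exact one_sub_ge_exp (by positivity)
          (by nlinarith [pow_le_one₀ hq0.le hq1.le (n := i)]) hq1

lemma qP_q_ne_zero (hq0 : 0 < q) (hq1 : q < 1) (j : ℕ) : qP q (q:ℂ) j ≠ 0 := by
  intro h
  have := lt_of_lt_of_le (Real.exp_pos _) (qP_q_lower hq0 hq1 j)
  rw [h] at this; simp at this

lemma one_sub_qq_ne (hq0 : 0 < q) (hq1 : q < 1) (k : ℕ) :
    (1 : ℂ) - (q:ℂ)*(q:ℂ)^k ≠ 0 := by
  have h : (0:ℝ) < 1 - q * q^k := by nlinarith [pow_le_one₀ hq0.le hq1.le (n := k)]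
  intro hc
  have : ((1 - q*q^k : ℝ):ℂ) = 0 := by push_cast; exact hc
  rw [Complex.ofReal_eq_zero] at this
  linarith [this ▸ h]

end API


set_option maxHeartbeats 1000000 in
lemma qVdM {q : ℝ} (hq0 : 0 < q) (hq1 : q < 1) (u v : ℂ) (p : ℕ) :
    ∑ k ∈ Finset.range (p+1),
      qP q u k * qP q v (p-k) * v^k / (qP q (q:ℂ) k * qP q (q:ℂ) (p-k))
    = qP q (u*v) p / qP q (q:ℂ) p := by
  induction p with
  | zero => simp [qP]
  | succ p ih =>
    have hqne : ∀ j, qP q (q:ℂ) j ≠ 0 := qP_q_ne_zero hq0 hq1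
    have hfac : ∀ j : ℕ, (1:ℂ) - (q:ℂ)*(q:ℂ)^j ≠ 0 := one_sub_qq_ne hq0 hq1
    have hqc : (q:ℂ) ≠ 0 := by exact_mod_cast hq0.ne'
    set A : ℕ → ℂ := fun k => qP q u k * qP q v (p+1-k) * v^k * (q:ℂ)^(p+1-k) *
      (1 - (q:ℂ)^k) / (qP q (q:ℂ) k * qP q (q:ℂ) (p+1-k)) with hA
    set B : ℕ → ℂ := fun k => qP q u k * qP q v (p+1-k) * v^k *
      (1 - (q:ℂ)^(p+1-k)) / (qP q (q:ℂ) k * qP q (q:ℂ) (p+1-k)) with hB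
    have split : ∀ k ∈ Finset.range (p+2),
        (1 - (q:ℂ)^(p+1)) * (qP q u k * qP q v (p+1-k) * v^k /
          (qP q (q:ℂ) k * qP q (q:ℂ) (p+1-k))) = A k + B k := by
      intro k hk
      have hk' : k ≤ p+1 := Nat.lt_succ_iff.mp (Finset.mem_range.mp hk)
      have hpow : (q:ℂ)^(p+1-k) * (q:ℂ)^k = (q:ℂ)^(p+1) := by
        rw [← pow_add]; congr 1; omega
      rw [hA, hB]
      simp only
      rw [← hpow]
      field_simp [hqne k, hqne (p+1-k)]
      ring
    have key : (1 - (q:ℂ)^(p+1)) * ∑ k ∈ Finset.range (p+2),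
        (qP q u k * qP q v (p+1-k) * v^k / (qP q (q:ℂ) k * qP q (q:ℂ) (p+1-k)))
        = (1 - u*v*(q:ℂ)^p) * ∑ k ∈ Finset.range (p+1),
        (qP q u k * qP q v (p-k) * v^k / (qP q (q:ℂ) k * qP q (q:ℂ) (p-k))) := by
      rw [Finset.mul_sum, Finset.sum_congr rfl split, Finset.sum_add_distrib,
        Finset.sum_range_succ' A (p+1), Finset.sum_range_succ B (p+1)]
      have hA0 : A 0 = 0 := by simp [hA]
      have hBp : B (p+1) = 0 := by simp [hB]
      rw [hA0, hBp, add_zero, add_zero, ← Finset.sum_add_distrib, Finset.mul_sum]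
      apply Finset.sum_congr rfl
      intro k hk
      have hk' : k ≤ p := Nat.lt_succ_iff.mp (Finset.mem_range.mp hk)
      have h1 : p+1-(k+1) = p-k := by omega
      have h2 : p+1-k = (p-k)+1 := by omega
      have hpow2 : (q:ℂ)^(p-k) * (q:ℂ)^k = (q:ℂ)^p := by
        rw [← pow_add]; congr 1; omega
      rw [hA, hB]
      simp only
      rw [h1, h2, qP_succ, qP_succ (c := (q:ℂ)), qP_succ (c := v), qP_succ (c := (q:ℂ)),
        pow_succ' (q:ℂ) k, ← hpow2]
      rw [div_add_div _ _ (mul_ne_zero (mul_ne_zero (hqne k) (hfac k)) (hqne (p-k)))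
        (mul_ne_zero (hqne k) (mul_ne_zero (hqne (p-k)) (hfac (p-k)))), mul_div_assoc',
        div_eq_div_iff (mul_ne_zero (mul_ne_zero (mul_ne_zero (hqne k) (hfac k)) (hqne (p-k)))
        (mul_ne_zero (hqne k) (mul_ne_zero (hqne (p-k)) (hfac (p-k))))) (mul_ne_zero (hqne k) (hqne (p-k)))]
      ring
    have hS : (1:ℂ) - (q:ℂ)^(p+1) ≠ 0 := by rw [pow_succ' (q:ℂ) p]; exact hfac p
    have ih' : (∑ k ∈ Finset.range (p+1),
        (qP q u k * qP q v (p-k) * v^k / (qP q (q:ℂ) k * qP q (q:ℂ) (p-k)))) * qP q (q:ℂ) p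
        = qP q (u*v) p := by
      rw [ih, div_mul_cancel₀ _ (hqne p)]
    rw [qP_succ, qP_succ (c := (q:ℂ))]
    rw [eq_div_iff (mul_ne_zero (hqne p) (hfac p))]
    rw [pow_succ' (q:ℂ) p] at key
    linear_combination (qP q (q:ℂ) p) * key + (1 - u*v*(q:ℂ)^p) * ih'


lemma div_pow_rpow {q x : ℝ} (hq0 : 0 < q) (hx : 0 < x) (l : ℕ) (e : ℝ) :
    (x / q^l) ^ e = x ^ e * q ^ (-((l:ℝ)*e)) := by
  rw [Real.div_rpow hx.le (by positivity), ← Real.rpow_natCast q l, ← Real.rpow_mul hq0.le,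
    div_eq_mul_inv, ← Real.rpow_neg hq0.le]

lemma exists_bound_forall {a b : ℕ → ℝ} (hb : ∀ l, 0 < b l) :
    ∀ (N : ℕ) (C₁ : ℝ), (∀ l, N ≤ l → a l ≤ C₁ * b l) → ∃ C, 0 ≤ C ∧ ∀ l, a l ≤ C * b l := by
  intro N
  induction N with
  | zero =>
    intro C₁ h
    refine ⟨max C₁ 0, le_max_right _ _, fun l => (h l (Nat.zero_le _)).trans ?_⟩
    exact mul_le_mul_of_nonneg_right (le_max_left _ _) (hb l).le
  | succ N ih =>
    intro C₁ h
    refine ih (max C₁ (a N / b N)) (fun l hl => ?_)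
    rcases Nat.eq_or_lt_of_le hl with heq | hlt
    · rw [← heq]
      calc a N = (a N / b N) * b N := (div_mul_cancel₀ _ (hb N).ne').symm
        _ ≤ max C₁ (a N / b N) * b N :=
          mul_le_mul_of_nonneg_right (le_max_right _ _) (hb N).le
    · exact (h l hlt).trans (mul_le_mul_of_nonneg_right (le_max_left _ _) (hb l).le)


lemma hfx_lemma {q : ℝ} (hq0 : 0 < q) (hq1 : q < 1) {ρ : ℝ} (f : ℝ → ℂ)
    (hf : ∀ x ∈ Set.Ioc q 1, ∃ C : ℝ, ∀ l : ℕ, ‖f (x / q ^ l)‖ ≤ C * q ^ ((l : ℝ) * ρ)) :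
    ∀ y : ℝ, 0 < y → ∃ C : ℝ, 0 ≤ C ∧ ∀ l : ℕ, ‖f (y / q ^ l)‖ ≤ C * q ^ ((l:ℝ)*ρ) := by
  intro y hy
  have hq1' : 1 < q⁻¹ := (one_lt_inv₀ hq0).mpr hq1
  obtain ⟨n, hn1, hn2⟩ := exists_mem_Ioc_zpow hy hq1'
  have hz : ∀ m : ℤ, (0:ℝ) < q ^ m := fun m => zpow_pos hq0 m
  have hzinv : ∀ m : ℤ, (q⁻¹ : ℝ)^m * q^m = 1 := by
    intro m
    rw [inv_zpow, ← zpow_neg, ← zpow_add₀ hq0.ne']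
    simp
  have hx₀ : y * q^(n+1) ∈ Set.Ioc q 1 := by
    constructor
    · have h := mul_lt_mul_of_pos_right hn1 (hz (n+1))
      calc q = (q⁻¹)^n * q^(n+1) := by
            rw [inv_zpow, ← zpow_neg, ← zpow_add₀ hq0.ne']
            rw [show -n + (n+1) = 1 by ring, zpow_one]
        _ < y * q^(n+1) := h
    · have h := mul_le_mul_of_nonneg_right hn2 (hz (n+1)).le
      calc y * q^(n+1) ≤ (q⁻¹)^(n+1) * q^(n+1) := h
        _ = 1 := hzinv (n+1)
  obtain ⟨C, hC⟩ := hf _ hx₀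
  apply exists_bound_forall (a := fun l : ℕ => ‖f (y / q ^ l)‖)
    (b := fun l : ℕ => q ^ ((l:ℝ)*ρ))
    (fun l => Real.rpow_pos_of_pos hq0 _) ((-(n+1)).toNat) (C * q ^ (((n:ℝ)+1)*ρ))
  intro l hl
  have hl' : 0 ≤ (l:ℤ) + (n+1) := by omega
  have hyq : y / q^l = (y * q^(n+1)) / q^(((l:ℤ)+(n+1)).toNat) := by
    have e1 : (q:ℝ)^(((l:ℤ)+(n+1)).toNat) = q^(l:ℤ) * q^(n+1) := by
      rw [← zpow_natCast, show ((((l:ℤ)+(n+1)).toNat : ℤ)) = (l:ℤ)+(n+1) from by omega,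
        zpow_add₀ hq0.ne']
    rw [e1, ← zpow_natCast q l,
      div_eq_div_iff (hz (l:ℤ)).ne' (mul_pos (hz (l:ℤ)) (hz (n+1))).ne',
      mul_comm ((q:ℝ)^(l:ℤ)) ((q:ℝ)^(n+1)), ← mul_assoc]
  rw [hyq]
  refine (hC _).trans (le_of_eq ?_)
  have h2 : ((((l:ℤ)+(n+1)).toNat : ℕ) : ℝ) = (l:ℝ) + ((n:ℝ)+1) := by
    have h3 : (((l:ℤ)+(n+1)).toNat : ℤ) = (l:ℤ)+(n+1) := Int.toNat_of_nonneg hl'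
    exact_mod_cast congrArg (Int.cast : ℤ → ℝ) h3
  rw [h2, add_mul, Real.rpow_add hq0]
  ring


/-- Fractional q-Weyl integral operator
`(W_ν f)(x) = x^ν ∑_{l≥0} f(x q^{-l}) q^{-lν} (q^ν;q)_l / (q;q)_l`. -/
noncomputable def Wop (q : ℝ) (ν : ℂ) (f : ℝ → ℂ) (x : ℝ) : ℂ :=
  (x : ℂ) ^ ν * ∑' l : ℕ,
    f (x / q ^ l) * (q : ℂ) ^ (-(l : ℂ) * ν) * qP q ((q : ℂ) ^ ν) l / qP q (q : ℂ) l

set_option maxHeartbeats 1000000 in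
/-- Semigroup property of the fractional q-Weyl integrals: `W_ν ∘ W_μ = W_{ν+μ}`
on functions with sufficient decay on q-grids tending to infinity. -/
theorem Wop_semigroup (q : ℝ) (hq0 : 0 < q) (hq1 : q < 1)
    (ν μ : ℂ) (hν : 0 < ν.re) (hμ : 0 < μ.re)
    (ρ : ℝ) (hρ : (μ + ν).re < ρ) (f : ℝ → ℂ)
    (hf : ∀ x ∈ Set.Ioc q 1, ∃ C : ℝ, ∀ l : ℕ, ‖f (x / q ^ l)‖ ≤ C * q ^ ((l : ℝ) * ρ)) :
    ∀ x : ℝ, 0 < x → Wop q ν (fun t => Wop q μ f t) x = Wop q (ν + μ) f x := by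
  intro x hx
  obtain ⟨C, hC0, hC⟩ := hfx_lemma hq0 hq1 f hf x hx
  have hsum : μ.re + ν.re < ρ := by rw [Complex.add_re] at hρ; linarith
  have hρμ : μ.re < ρ := by linarith
  -- the double family
  set G : ℕ × ℕ → ℂ := fun lk =>
    ((x / q^lk.1 : ℝ):ℂ)^μ * (q:ℂ)^(-(lk.1:ℂ)*ν) * qP q ((q:ℂ)^ν) lk.1 / qP q (q:ℂ) lk.1 *
    (f (x/q^lk.1/q^lk.2) * (q:ℂ)^(-(lk.2:ℂ)*μ) * qP q ((q:ℂ)^μ) lk.2 / qP q (q:ℂ) lk.2)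
    with hGdef
  -- summability of G
  set s : ℝ := q ^ (ρ - μ.re - ν.re) with hs
  set t : ℝ := q ^ (ρ - μ.re) with ht
  have hs0 : 0 < s := Real.rpow_pos_of_pos hq0 _
  have ht0 : 0 < t := Real.rpow_pos_of_pos hq0 _
  have hs1 : s < 1 := Real.rpow_lt_one hq0.le hq1 (by linarith)
  have ht1 : t < 1 := Real.rpow_lt_one hq0.le hq1 (by linarith)
  set L : ℝ := Real.exp (-(q * (1-q)⁻¹ * (1-q)⁻¹)) with hL
  set Dν : ℝ := Real.exp (‖(q:ℂ)^ν‖ * (1 - q)⁻¹) / L with hDν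
  set Dμ : ℝ := Real.exp (‖(q:ℂ)^μ‖ * (1 - q)⁻¹) / L with hDμ
  have hrat : ∀ (c:ℂ) (j:ℕ), ‖qP q c j / qP q (q:ℂ) j‖ ≤ Real.exp (‖c‖*(1-q)⁻¹) / L := by
    intro c j
    rw [norm_div]
    exact div_le_div₀ (Real.exp_pos _).le (qP_norm_le hq0 hq1 c j) (Real.exp_pos _)
      (qP_q_lower hq0 hq1 j)
  set K : ℝ := x ^ μ.re * Dν * C * Dμ with hK
  have hbound : ∀ lk : ℕ×ℕ, ‖G lk‖ ≤ K * (s ^ lk.1 * t ^ lk.2) := by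
    rintro ⟨l, k⟩
    have hre : G (l,k) = (((x/q^l : ℝ):ℂ)^μ * (q:ℂ)^(-(l:ℂ)*ν)) *
        (qP q ((q:ℂ)^ν) l / qP q (q:ℂ) l) *
        ((f (x/q^l/q^k) * (q:ℂ)^(-(k:ℂ)*μ)) * (qP q ((q:ℂ)^μ) k / qP q (q:ℂ) k)) := by
      simp only [hGdef]; ring
    rw [hre, norm_mul, norm_mul, norm_mul, norm_mul, norm_mul]
    have n1 : ‖((x/q^l : ℝ):ℂ)^μ‖ = (x/q^l) ^ μ.re := rpos_cpow_norm (by positivity) μ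
    have n2 : ‖(q:ℂ)^(-(l:ℂ)*ν)‖ = q ^ (-((l:ℝ)*ν.re)) := by
      rw [rpos_cpow_norm hq0]; congr 1; simp
    have n3 : ‖(q:ℂ)^(-(k:ℂ)*μ)‖ = q ^ (-((k:ℝ)*μ.re)) := by
      rw [rpos_cpow_norm hq0]; congr 1; simp
    have n4 : ‖f (x/q^l/q^k)‖ ≤ C * q ^ (((l:ℝ)+(k:ℝ))*ρ) := by
      have e : x/q^l/q^k = x/q^(l+k) := by rw [div_div, pow_add]
      rw [e]
      refine (hC (l+k)).trans (le_of_eq ?_)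
      congr 2
      push_cast
      ring
    rw [n1, n2, n3]
    calc (x/q^l)^μ.re * q^(-((l:ℝ)*ν.re)) * ‖qP q ((q:ℂ)^ν) l / qP q (q:ℂ) l‖ *
          (‖f (x/q^l/q^k)‖ * q^(-((k:ℝ)*μ.re)) * ‖qP q ((q:ℂ)^μ) k / qP q (q:ℂ) k‖)
        ≤ (x/q^l)^μ.re * q^(-((l:ℝ)*ν.re)) * Dν *
          ((C * q^(((l:ℝ)+(k:ℝ))*ρ)) * q^(-((k:ℝ)*μ.re)) * Dμ) := by
          have h1 := hrat ((q:ℂ)^ν) l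
          have h2 := hrat ((q:ℂ)^μ) k
          rw [← hDν] at h1
          rw [← hDμ] at h2
          gcongr <;> first
            | exact h1
            | exact h2
            | exact n4
            | exact mul_nonneg hC0 (Real.rpow_pos_of_pos hq0 _).le
            | positivity
      _ = K * (s^l * t^k) := by
          rw [div_pow_rpow hq0 hx l μ.re]
          have hcomb : q^(-((l:ℝ)*μ.re)) * q^(-((l:ℝ)*ν.re)) * q^(((l:ℝ)+(k:ℝ))*ρ) *
              q^(-((k:ℝ)*μ.re)) = s^l * t^k := by
            rw [hs, ht, ← Real.rpow_natCast (q ^ (ρ - μ.re - ν.re)) l,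
              ← Real.rpow_natCast (q ^ (ρ - μ.re)) k, ← Real.rpow_mul hq0.le,
              ← Real.rpow_mul hq0.le, ← Real.rpow_add hq0, ← Real.rpow_add hq0,
              ← Real.rpow_add hq0, ← Real.rpow_add hq0]
            congr 1
            ring
          rw [hK, ← hcomb]
          ring
  have hG : Summable G := by
    apply Summable.of_norm_bounded ?_ hbound
    exact Summable.mul_left K
      ((summable_geometric_of_lt_one hs0.le hs1).mul_of_nonneg
        (summable_geometric_of_lt_one ht0.le ht1)
        (fun n => pow_nonneg hs0.le n) (fun n => pow_nonneg ht0.le n))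
  -- step A : expand the iterated operator
  have stepA : Wop q ν (fun t => Wop q μ f t) x = (x:ℂ)^ν * ∑' (l:ℕ) (k:ℕ), G (l,k) := by
    simp only [Wop]
    congr 1
    apply tsum_congr; intro l
    calc ((x/q^l : ℝ):ℂ)^μ * (∑' (k:ℕ), (f (x/q^l/q^k) * (q:ℂ)^(-(k:ℂ)*μ) *
            qP q ((q:ℂ)^μ) k / qP q (q:ℂ) k)) * (q:ℂ)^(-(l:ℂ)*ν) *
            qP q ((q:ℂ)^ν) l / qP q (q:ℂ) l
        = (((x/q^l : ℝ):ℂ)^μ * (q:ℂ)^(-(l:ℂ)*ν) * qP q ((q:ℂ)^ν) l / qP q (q:ℂ) l) *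
          ∑' (k:ℕ), (f (x/q^l/q^k) * (q:ℂ)^(-(k:ℂ)*μ) * qP q ((q:ℂ)^μ) k / qP q (q:ℂ) k) := by
          ring
      _ = ∑' (k:ℕ), G (l,k) := by
          rw [hGdef]
          exact tsum_mul_left.symm
  -- reindexing along antidiagonals
  set ψ : ℕ×ℕ → ℕ×ℕ := fun lk => (lk.1 + lk.2, lk.2) with hψdef
  set H : ℕ×ℕ → ℂ := fun pk => if pk.2 ≤ pk.1 then G (pk.1 - pk.2, pk.2) else 0 with hHdef
  have hψ : Function.Injective ψ := by
    intro a b h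
    have h1 := congrArg Prod.fst h
    have h2 := congrArg Prod.snd h
    simp only [hψdef] at h1 h2
    exact Prod.ext (by omega) h2
  have hcompeq : H ∘ ψ = G := by
    funext lk
    simp only [Function.comp, hψdef, hHdef, hGdef]
    rw [if_pos (Nat.le_add_left _ _)]
    simp
  have hvanish : ∀ y ∉ Set.range ψ, H y = 0 := by
    intro y hy
    rw [hHdef]
    simp only
    rw [if_neg]
    intro hle
    exact hy ⟨(y.1 - y.2, y.2), by
      simp only [hψdef]
      exact Prod.ext (by simp; omega) rfl⟩
  have hsupp : Function.support H ⊆ Set.range ψ := by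
    intro y hy
    by_contra hc
    exact hy (hvanish y hc)
  have hH : Summable H := by
    rw [← hψ.summable_iff hvanish, hcompeq]
    exact hG
  have stepC : ∑' lk : ℕ×ℕ, G lk = ∑' pk : ℕ×ℕ, H pk := by
    calc ∑' lk : ℕ×ℕ, G lk = ∑' lk : ℕ×ℕ, H (ψ lk) :=
          tsum_congr (fun lk => (congrFun hcompeq lk).symm)
      _ = ∑' pk : ℕ×ℕ, H pk := hψ.tsum_eq hsupp
  -- evaluate antidiagonal sums with q-Vandermonde
  have stepF : ∀ p : ℕ, ∑' (k:ℕ), H (p,k) =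
      (x:ℂ)^μ * (f (x/q^p) * (q:ℂ)^(-(p:ℂ)*(ν+μ)) * qP q ((q:ℂ)^(ν+μ)) p / qP q (q:ℂ) p) := by
    intro p
    rw [tsum_eq_sum (s := Finset.range (p+1)) (fun k hk => by
      rw [hHdef]
      simp only
      rw [if_neg]
      simp only [Finset.mem_range] at hk
      omega)]
    have termeq : ∀ k ∈ Finset.range (p+1), H (p,k) =
        (f (x/q^p) * (x:ℂ)^μ * (q:ℂ)^(-(p:ℂ)*μ) * (q:ℂ)^(-(p:ℂ)*ν)) *
        (qP q ((q:ℂ)^μ) k * qP q ((q:ℂ)^ν) (p-k) * ((q:ℂ)^ν)^k /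
          (qP q (q:ℂ) k * qP q (q:ℂ) (p-k))) := by
      intro k hk
      have hk' : k ≤ p := Nat.lt_succ_iff.mp (Finset.mem_range.mp hk)
      rw [hHdef]
      simp only
      rw [if_pos hk']
      rw [hGdef]
      simp only
      have e1 : x/q^(p-k)/q^k = x/q^p := by
        rw [div_div, ← pow_add, Nat.sub_add_cancel hk']
      have ecast : ((p-k:ℕ):ℂ) = (p:ℂ) - (k:ℂ) := by
        push_cast [Nat.cast_sub hk']
        ring
      have e3 : (q:ℂ)^(-((p-k:ℕ):ℂ)*μ) * (q:ℂ)^(-(k:ℂ)*μ) = (q:ℂ)^(-(p:ℂ)*μ) := by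
        rw [← rpos_cpow_add hq0]
        congr 1
        rw [ecast]; ring
      have e4 : (q:ℂ)^(-((p-k:ℕ):ℂ)*ν) = (q:ℂ)^(-(p:ℂ)*ν) * ((q:ℂ)^ν)^k := by
        rw [← rpos_cpow_natmul hq0 k ν, ← rpos_cpow_add hq0]
        congr 1
        rw [ecast]; ring
      rw [e1, div_pow_cpow hq0 hx (p-k) μ, e4, ← e3]
      ring
    rw [Finset.sum_congr rfl termeq, ← Finset.mul_sum,
      qVdM hq0 hq1 ((q:ℂ)^μ) ((q:ℂ)^ν) p]
    have e5 : (q:ℂ)^μ * (q:ℂ)^ν = (q:ℂ)^(ν+μ) := by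
      rw [rpos_cpow_add hq0 ν μ, mul_comm]
    have e6 : (q:ℂ)^(-(p:ℂ)*μ) * (q:ℂ)^(-(p:ℂ)*ν) = (q:ℂ)^(-(p:ℂ)*(ν+μ)) := by
      rw [← rpos_cpow_add hq0]
      congr 1
      ring
    rw [e5, ← e6]
    ring
  -- put everything together
  calc Wop q ν (fun t => Wop q μ f t) x
      = (x:ℂ)^ν * ∑' (l:ℕ) (k:ℕ), G (l,k) := stepA
    _ = (x:ℂ)^ν * ∑' lk : ℕ×ℕ, G lk := by rw [← Summable.tsum_prod hG]
    _ = (x:ℂ)^ν * ∑' pk : ℕ×ℕ, H pk := by rw [stepC]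
    _ = (x:ℂ)^ν * ∑' (p:ℕ) (k:ℕ), H (p,k) := by rw [Summable.tsum_prod hH]
    _ = (x:ℂ)^ν * ∑' (p:ℕ), ((x:ℂ)^μ *
        (f (x/q^p) * (q:ℂ)^(-(p:ℂ)*(ν+μ)) * qP q ((q:ℂ)^(ν+μ)) p / qP q (q:ℂ) p)) := by
        rw [tsum_congr stepF]
    _ = Wop q (ν + μ) f x := by
        rw [tsum_mul_left, Wop, rpos_cpow_add hx ν μ]
        ring
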